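/- Assume the Gauss periods η_a, 0 ≤ a ≤ N−1, take exactly three rational values α₁, α₂, α₃ forming an arithmetic progression with α₁ − α₂ = −t < 0 and α₃ − α₂ = t > 0. Then the group-ring element I₁ − I₃ generates a circulant weighing matrix CW(N, q/t²), i.e. (I₁ − I₃)(I₁ − I₃)^{(−1)} = (q/t²)·1 in ℚ[Z_N], if and only if q is a square and α₂ = (√q − 1)/N. -/

import Mathlib

open scoped BigOperators


section
variable {p : ℕ} [Fact p.Prime] {F : Type} [Field F] [Fintype F] [Algebra (ZMod p) F]
  {ζ : ℂ} (hζ : IsPrimitiveRoot ζ p) {ψ : F → ℂ}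
  (hψ : ∀ x, ψ x = ζ ^ (Algebra.trace (ZMod p) F x).val)

set_option linter.unusedSectionVars false

include hζ hψ

lemma zpow_val_add (a b : ZMod p) : ζ ^ (a + b).val = ζ ^ a.val * ζ ^ b.val := by
  have hp : (p : ℕ) ≠ 0 := (Fact.out : p.Prime).ne_zero
  haveI : NeZero p := ⟨hp⟩
  have h1 : ζ ^ p = 1 := hζ.pow_eq_one
  have key : ∀ n : ℕ, ζ ^ (n % p) = ζ ^ n := by
    intro n
    conv_rhs => rw [← Nat.div_add_mod n p]
    rw [pow_add, pow_mul, h1, one_pow, one_mul]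
  rw [ZMod.val_add, key, pow_add]

lemma psi_add (x y : F) : ψ (x + y) = ψ x * ψ y := by
  rw [hψ, hψ, hψ, map_add]
  exact zpow_val_add hζ hψ _ _

lemma psi_zero : ψ 0 = 1 := by rw [hψ]; simp

lemma psi_abs (x : F) : ‖ψ x‖ = 1 := by
  have h1 : ψ x ^ p = 1 := by
    rw [hψ, ← pow_mul, mul_comm, pow_mul, hζ.pow_eq_one, one_pow]
  exact Complex.norm_eq_one_of_pow_eq_one h1 (Fact.out : p.Prime).ne_zero

lemma psi_neg (x : F) : ψ (-x) = (starRingEnd ℂ) (ψ x) := by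
  have h1 : ψ x * ψ (-x) = 1 := by rw [← psi_add hζ hψ]; simp [psi_zero hζ hψ]
  have h2 : ψ x * (starRingEnd ℂ) (ψ x) = 1 := by
    rw [Complex.mul_conj, Complex.normSq_eq_norm_sq, psi_abs hζ hψ]; norm_num
  rw [eq_inv_of_mul_eq_one_right h1, eq_inv_of_mul_eq_one_right h2]

lemma psi_sum_zero : ∑ x : F, ψ x = 0 := by
  obtain ⟨b, hb⟩ := Algebra.trace_surjective (ZMod p) F 1
  haveI : Fact (1 < p) := ⟨(Fact.out : p.Prime).one_lt⟩
  have hb1 : ψ b ≠ 1 := by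
    rw [hψ, hb, ZMod.val_one, pow_one]
    exact hζ.ne_one (Fact.out : p.Prime).one_lt
  have key : ∑ x : F, ψ x = ∑ x : F, ψ b * ψ x :=
    Fintype.sum_bijective (· - b) (sub_left_injective.bijective_of_finite) _ _
      (fun x => by rw [← psi_add hζ hψ]; ring_nf)
  have h2 : (1 - ψ b) * ∑ x : F, ψ x = 0 := by
    rw [← Finset.mul_sum] at key; linear_combination key
  rcases mul_eq_zero.mp h2 with h | h
  · exact absurd (by linear_combination -h) hb1
  · exact h
end


lemma zsum {α : Type*} [AddCommMonoid α] (n : ℕ) [NeZero n] (f : ℕ → α) :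
    ∑ x : ZMod n, f x.val = ∑ i ∈ Finset.range n, f i :=
  Finset.sum_nbij' (fun x => x.val) (fun i => (i : ZMod n))
    (fun a _ => Finset.mem_range.mpr (ZMod.val_lt a))
    (fun a _ => Finset.mem_univ _)
    (fun a _ => by simp [ZMod.natCast_val])
    (fun a ha => ZMod.val_cast_of_lt (Finset.mem_range.mp ha))
    (fun a _ => rfl)

lemma dsum {α : Type*} [AddCommMonoid α] (B C : ℕ) (f : ℕ → α) :
    ∑ i ∈ Finset.range (B * C), f i = ∑ a ∈ Finset.range B, ∑ j ∈ Finset.range C, f (a + B * j) := by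
  rcases Nat.eq_zero_or_pos B with rfl | hB
  · simp
  rw [← Finset.sum_product']
  refine Finset.sum_nbij' (fun i => ((i % B, i / B) : ℕ × ℕ)) (fun x => x.1 + B * x.2)
    ?_ ?_ ?_ ?_ ?_
  · intro i hi
    simp only [Finset.mem_product, Finset.mem_range] at *
    exact ⟨Nat.mod_lt _ hB, Nat.div_lt_iff_lt_mul hB |>.mpr (by rw [mul_comm]; exact hi)⟩
  · intro x hx
    simp only [Finset.mem_product, Finset.mem_range] at *
    have h1 : x.1 + 1 ≤ B := hx.1
    have h2 : x.2 + 1 ≤ C := hx.2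
    calc x.1 + B * x.2 + 1 ≤ B + B * x.2 := by omega
    _ ≤ B * C := by nlinarith
  · intro i _; exact Nat.mod_add_div i B
  · intro x hx
    simp only [Finset.mem_product, Finset.mem_range] at hx
    have e1 : (x.1 + B * x.2) % B = x.1 := by
      simp [Nat.add_mul_mod_self_left, Nat.mod_eq_of_lt hx.1]
    have e2 : (x.1 + B * x.2) / B = x.2 := by
      rw [Nat.add_mul_div_left _ _ hB, Nat.div_eq_of_lt hx.1, zero_add]
    ext <;> simp [e1, e2]
  · intro i _; rw [show i % B + B * (i / B) = i from Nat.mod_add_div i B]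

section
variable {F : Type} [Field F] [Fintype F] {q : ℕ} (hcard : Fintype.card F = q)
  {γ : F} (hγ : orderOf γ = q - 1) (hq2 : 2 ≤ q)

set_option linter.unusedSectionVars false

include hcard hγ hq2

lemma gamma_ne_zero : γ ≠ 0 := by
  intro h
  have h1 := pow_orderOf_eq_one γ
  rw [hγ, h] at h1
  rw [zero_pow (by omega)] at h1
  exact zero_ne_one h1

lemma gamma_pow_inj {i j : ℕ} (hi : i < q - 1) (hj : j < q - 1) (h : γ ^ i = γ ^ j) : i = j := by
  have h0 := gamma_ne_zero hcard hγ hq2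
  have h' : (Units.mk0 γ h0) ^ i = (Units.mk0 γ h0) ^ j := by
    ext; simpa using h
  have ho : orderOf (Units.mk0 γ h0) = q - 1 := by
    rw [← orderOf_units]; simpa using hγ
  exact pow_injOn_Iio_orderOf (by rw [ho]; exact hi) (by rw [ho]; exact hj) h'

lemma gamma_pow_surj {x : F} (hx : x ≠ 0) : ∃ i < q - 1, γ ^ i = x := by
  classical
  have h0 := gamma_ne_zero hcard hγ hq2
  set γu := Units.mk0 γ h0 with hγu
  have ho : orderOf γu = q - 1 := by rw [← orderOf_units]; simpa [hγu] using hγ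
  have hcu : Nat.card Fˣ = q - 1 := by
    rw [Nat.card_eq_fintype_card, Fintype.card_units, hcard]
  have htop : Subgroup.zpowers γu = ⊤ := by
    apply Subgroup.eq_top_of_card_eq
    rw [Nat.card_zpowers, ho, hcu]
  have hmem : Units.mk0 x hx ∈ Subgroup.zpowers γu := htop ▸ Subgroup.mem_top _
  have hmem2 : Units.mk0 x hx ∈ Submonoid.powers γu :=
    (IsOfFinOrder.mem_powers_iff_mem_zpowers (isOfFinOrder_of_finite _)).mpr hmem
  obtain ⟨n, hn⟩ := hmem2
  simp only at hn
  refine ⟨n % (q - 1), Nat.mod_lt _ (by omega), ?_⟩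
  have h2 : γu ^ (n % (q - 1)) = Units.mk0 x hx := by
    rw [← ho, pow_mod_orderOf, hn]
  calc γ ^ (n % (q-1)) = ((γu ^ (n % (q-1)) : Fˣ) : F) := by simp [hγu]
  _ = x := by rw [h2]; simp

lemma sum_gamma_pow [DecidableEq F] (φ : F → ℂ) :
    ∑ i ∈ Finset.range (q - 1), φ (γ ^ i) = ∑ x ∈ Finset.univ.erase (0 : F), φ x := by
  apply Finset.sum_bij (fun i _ => γ ^ i)
  · intro i hi
    exact Finset.mem_erase.mpr ⟨pow_ne_zero _ (gamma_ne_zero hcard hγ hq2), Finset.mem_univ _⟩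
  · intro i hi j hj h
    exact gamma_pow_inj hcard hγ hq2 (Finset.mem_range.mp hi) (Finset.mem_range.mp hj) h
  · intro x hx
    obtain ⟨i, hi, hix⟩ := gamma_pow_surj hcard hγ hq2 (Finset.mem_erase.mp hx).1
    exact ⟨i, Finset.mem_range.mpr hi, hix⟩
  · intro i _; rfl
end



lemma cyc {α : Type*} [AddCommMonoid α] (M j : ℕ) (hM : 0 < M) (f : ℕ → α) :
    ∑ d ∈ Finset.range M, f ((j + d) % M) = ∑ k ∈ Finset.range M, f k := by
  apply Finset.sum_bij (fun d _ => (j + d) % M)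
  · intro d _; exact Finset.mem_range.mpr (Nat.mod_lt _ hM)
  · intro d₁ h₁ d₂ h₂ h
    have m₁ := Finset.mem_range.mp h₁
    have m₂ := Finset.mem_range.mp h₂
    have : d₁ % M = d₂ % M := by
      have e : (j + d₁) % M = (j + d₂) % M := h
      have := Nat.ModEq.add_left_cancel' j (e : (j + d₁) ≡ (j + d₂) [MOD M])
      exact this
    rwa [Nat.mod_eq_of_lt m₁, Nat.mod_eq_of_lt m₂] at this
  · intro k hk
    have hkM := Finset.mem_range.mp hk
    refine ⟨(k + M - j % M) % M, Finset.mem_range.mpr (Nat.mod_lt _ hM), ?_⟩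
    have h1 : j ≡ j % M [MOD M] := (Nat.mod_modEq j M).symm
    have h2 : (k + M - j % M) % M ≡ k + M - j % M [MOD M] := Nat.mod_modEq _ M
    have h3 : j + (k + M - j % M) % M ≡ j % M + (k + M - j % M) [MOD M] :=
      Nat.ModEq.add h1 h2
    have h4 : j % M + (k + M - j % M) = k + M := by
      have : j % M < M := Nat.mod_lt _ hM
      omega
    have h5 : (j + (k + M - j % M) % M) % M = (k + M) % M := by
      rw [h3]; rw [h4]
    rw [h5, Nat.add_mod_right, Nat.mod_eq_of_lt hkM]
  · intro d _; rfl


lemma sum_zero_or (s : Finset ℕ) (g : ℕ → ℂ) (m : ℕ) (h : ∀ i ∈ s, g i = 0 ∨ g i = m) :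
    ∃ z : ℕ, ∑ i ∈ s, g i = (m : ℂ) * z := by
  classical
  induction s using Finset.induction with
  | empty => exact ⟨0, by simp⟩
  | @insert x s' hx ih =>
      obtain ⟨z, hz⟩ := ih (fun i hi => h i (Finset.mem_insert_of_mem hi))
      rcases h x (Finset.mem_insert_self x s') with h0 | h1
      · exact ⟨z, by rw [Finset.sum_insert hx, h0, zero_add, hz]⟩
      · exact ⟨z + 1, by rw [Finset.sum_insert hx, h1, hz]; push_cast; ring⟩

section
variable {p f N q : ℕ} [Fact p.Prime] {F : Type} [Field F] [Fintype F] [Algebra (ZMod p) F]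
  (hcard : Fintype.card F = q)
  {γ : F} (hγ : orderOf γ = q - 1) (hq2 : 2 ≤ q)
  {ψ : F → ℂ}
  (hadd : ∀ x y : F, ψ (x + y) = ψ x * ψ y) (hzero : ψ 0 = 1)
  (hsum0 : ∑ x : F, ψ x = 0)
  [DecidableEq F] {η : ℕ → ℂ} {M : ℕ} (hM : q - 1 = N * M) (hM0 : 0 < M) (hN0 : 0 < N)
  (hη' : ∀ a, η a = ∑ j ∈ Finset.range M, ψ (γ ^ (a + N * j)))

set_option linter.unusedSectionVars false
set_option maxHeartbeats 1000000

include hcard hγ hq2 hadd hzero hsum0 hM hM0 hN0 hη'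

lemma sumc (c : F) :
    ∑ i ∈ Finset.range (q - 1), ψ (γ ^ i * c) = if c = 0 then ((q : ℂ) - 1) else -1 := by
  classical
  split_ifs with hc
  · subst hc
    simp only [mul_zero, hzero, Finset.sum_const, Finset.card_range, nsmul_eq_mul,
      mul_one]
    push_cast [Nat.cast_sub (by omega : 1 ≤ q)]
    ring
  · rw [sum_gamma_pow hcard hγ hq2 (fun x => ψ (x * c))]
    have hbij : ∑ x ∈ Finset.univ.erase (0 : F), ψ (x * c) = ∑ y ∈ Finset.univ.erase (0 : F), ψ y := by
      apply Finset.sum_bij (fun x _ => x * c)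
      · intro x hx
        exact Finset.mem_erase.mpr ⟨mul_ne_zero (Finset.mem_erase.mp hx).1 hc, Finset.mem_univ _⟩
      · intro x _ y _ h; exact mul_right_cancel₀ hc h
      · intro y hy
        refine ⟨y * c⁻¹, Finset.mem_erase.mpr ⟨?_, Finset.mem_univ _⟩, ?_⟩
        · exact mul_ne_zero (Finset.mem_erase.mp hy).1 (inv_ne_zero hc)
        · field_simp
      · intro x _; rfl
    rw [hbij]
    have h0 : ψ 0 + ∑ y ∈ Finset.univ.erase (0 : F), ψ y = 0 := by
      rw [Finset.add_sum_erase _ _ (Finset.mem_univ 0)]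
      exact hsum0
    rw [hzero] at h0
    linear_combination h0

lemma gpow_q1 : γ ^ (q - 1) = 1 := by rw [← hγ]; exact pow_orderOf_eq_one γ

lemma eta_add_N (a : ℕ) : η (a + N) = η a := by
  rw [hη', hη']
  have key : ∀ j : ℕ, ψ (γ ^ (a + N + N * j)) = ψ (γ ^ (a + N * (j + 1))) := by
    intro j; congr 1; ring_nf
  simp_rw [key]
  have hfM : ψ (γ ^ (a + N * M)) = ψ (γ ^ (a + N * 0)) := by
    congr 1
    rw [pow_add, pow_add, ← hM, gpow_q1 hcard hγ hq2 hadd hzero hsum0 hM hM0 hN0 hη']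
    simp
  have e1 := Finset.sum_range_succ' (fun j => ψ (γ ^ (a + N * j))) M
  have e2 := Finset.sum_range_succ (fun j => ψ (γ ^ (a + N * j))) M
  have : ∑ j ∈ Finset.range M, ψ (γ ^ (a + N * (j + 1))) + ψ (γ ^ (a + N * 0))
      = ∑ j ∈ Finset.range M, ψ (γ ^ (a + N * j)) + ψ (γ ^ (a + N * M)) := by
    rw [← e1, ← e2]
  rw [hfM] at this
  exact add_right_cancel this

lemma eta_add_mul (x k : ℕ) : η (x + N * k) = η x := by
  induction k with
  | zero => simp
  | succ n ih =>
      have : x + N * (n + 1) = (x + N * n) + N := by ring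
      rw [this, eta_add_N hcard hγ hq2 hadd hzero hsum0 hM hM0 hN0 hη', ih]

lemma eta_mod (a : ℕ) : η a = η (a % N) := by
  conv_lhs => rw [← Nat.mod_add_div a N]
  exact eta_add_mul hcard hγ hq2 hadd hzero hsum0 hM hM0 hN0 hη' _ _

lemma gNmod (x : ℕ) : γ ^ (N * (x % M)) = γ ^ (N * x) := by
  conv_rhs => rw [← Nat.mod_add_div x M]
  rw [Nat.mul_add, pow_add]
  have : γ ^ (N * (M * (x / M))) = 1 := by
    rw [← mul_assoc, pow_mul, ← hM, gpow_q1 hcard hγ hq2 hadd hzero hsum0 hM hM0 hN0 hη', one_pow]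
  rw [this, mul_one]

lemma corr (i₀ : ℕ) (hi₀ : i₀ < q - 1) (hneg : γ ^ i₀ = -1) (g : ℕ) (hg : g < N) :
    ∑ a ∈ Finset.range N, η a * η (a + g)
      = (q : ℂ) * (if g = i₀ % N then 1 else 0) - M := by
  have step1 : ∀ a : ℕ, η a * η (a + g)
      = ∑ j ∈ Finset.range M, ∑ d ∈ Finset.range M,
          ψ (γ ^ (a + N * j) * (1 + γ ^ (g + N * d))) := by
    intro a
    rw [hη' a, hη' (a + g), Finset.sum_mul_sum]
    apply Finset.sum_congr rfl
    intro j _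
    rw [← cyc M j hM0 (fun k => ψ (γ ^ (a + N * j)) * ψ (γ ^ (a + g + N * k)))]
    apply Finset.sum_congr rfl
    intro d _
    have e1 : γ ^ (a + g + N * ((j + d) % M)) = γ ^ (a + N * j) * γ ^ (g + N * d) := by
      rw [show a + g + N * ((j+d) % M) = (a + g) + N * ((j+d) % M) from rfl]
      rw [pow_add, gNmod hcard hγ hq2 hadd hzero hsum0 hM hM0 hN0 hη' (j + d)]
      rw [← pow_add, ← pow_add]
      congr 1
      ring
    rw [e1, ← hadd _ _, mul_add, mul_one]
  simp_rw [step1]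
  have swap : ∑ a ∈ Finset.range N, ∑ j ∈ Finset.range M, ∑ d ∈ Finset.range M,
        ψ (γ ^ (a + N * j) * (1 + γ ^ (g + N * d)))
      = ∑ d ∈ Finset.range M, ∑ a ∈ Finset.range N, ∑ j ∈ Finset.range M,
        ψ (γ ^ (a + N * j) * (1 + γ ^ (g + N * d))) := by
    calc ∑ a ∈ Finset.range N, ∑ j ∈ Finset.range M, ∑ d ∈ Finset.range M,
          ψ (γ ^ (a + N * j) * (1 + γ ^ (g + N * d)))
        = ∑ a ∈ Finset.range N, ∑ d ∈ Finset.range M, ∑ j ∈ Finset.range M,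
          ψ (γ ^ (a + N * j) * (1 + γ ^ (g + N * d))) :=
          Finset.sum_congr rfl (fun a _ => Finset.sum_comm)
      _ = ∑ d ∈ Finset.range M, ∑ a ∈ Finset.range N, ∑ j ∈ Finset.range M,
          ψ (γ ^ (a + N * j) * (1 + γ ^ (g + N * d))) := Finset.sum_comm
  rw [swap]
  have step3 : ∀ c : F, ∑ a ∈ Finset.range N, ∑ j ∈ Finset.range M, ψ (γ ^ (a + N * j) * c)
      = if c = 0 then ((q:ℂ) - 1) else -1 := by
    intro c
    rw [← dsum N M (fun i => ψ (γ ^ i * c)), ← hM]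
    exact sumc hcard hγ hq2 hadd hzero hsum0 hM hM0 hN0 hη' c
  simp_rw [step3]
  have hcond : ∀ d : ℕ, d < M →
      ((1 + γ ^ (g + N * d) = 0) ↔ (g = i₀ % N ∧ d = i₀ / N)) := by
    intro d hd
    constructor
    · intro h
      have hgd : γ ^ (g + N * d) = γ ^ i₀ := by
        rw [hneg]; linear_combination h
      have hlt : g + N * d < q - 1 := by
        rw [hM]
        have h1 : g + 1 ≤ N := hg
        have h2 : d + 1 ≤ M := hd
        nlinarith
      have heq : g + N * d = i₀ := gamma_pow_inj hcard hγ hq2 hlt hi₀ hgd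
      constructor
      · rw [← heq, Nat.add_mul_mod_self_left, Nat.mod_eq_of_lt hg]
      · rw [← heq, Nat.add_mul_div_left _ _ hN0, Nat.div_eq_of_lt hg, zero_add]
    · rintro ⟨hg', hd'⟩
      have : g + N * d = i₀ := by rw [hg', hd', Nat.mod_add_div]
      rw [this, hneg]
      ring
  by_cases hgi : g = i₀ % N
  · have hd0 : i₀ / N < M := by
      rw [Nat.div_lt_iff_lt_mul hN0, mul_comm M N, ← hM]; exact hi₀
    have : ∀ d ∈ Finset.range M,
        (if (1 + γ ^ (g + N * d) : F) = 0 then ((q:ℂ) - 1) else -1)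
          = (if d = i₀ / N then (q:ℂ) else 0) - 1 := by
      intro d hd
      rw [if_congr (hcond d (Finset.mem_range.mp hd)) rfl rfl]
      by_cases h : d = i₀ / N
      · simp [h, hgi]
      · simp [h]
    rw [Finset.sum_congr rfl this, Finset.sum_sub_distrib, Finset.sum_ite_eq' (Finset.range M)]
    simp [hgi, Finset.mem_range.mpr hd0]
  · have : ∀ d ∈ Finset.range M,
        (if (1 + γ ^ (g + N * d) : F) = 0 then ((q:ℂ) - 1) else -1) = -1 := by
      intro d hd
      rw [if_congr (hcond d (Finset.mem_range.mp hd)) rfl rfl, if_neg]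
      rintro ⟨h1, -⟩; exact hgi h1
    rw [Finset.sum_congr rfl this]
    simp [hgi]

lemma sum_eta : ∑ a ∈ Finset.range N, η a = -1 := by
  have expand : ∑ a ∈ Finset.range N, η a
      = ∑ i ∈ Finset.range (q - 1), ψ (γ ^ i * 1) := by
    rw [hM, dsum N M (fun i => ψ (γ ^ i * 1))]
    apply Finset.sum_congr rfl
    intro a _
    rw [hη' a]
    apply Finset.sum_congr rfl
    intro j _
    rw [mul_one]
  rw [expand, sumc hcard hγ hq2 hadd hzero hsum0 hM hM0 hN0 hη' 1, if_neg one_ne_zero]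

lemma eta_lb (m b s : ℕ) (hm2 : 2 ≤ m) (hqm : q = m * m) (hb : m + 1 = N * b)
    (hps : m = p ^ s) (a : ℕ) : ∃ z : ℕ, η a = (m : ℂ) * z - b := by
  have hb0 : 0 < b := by
    rcases Nat.eq_zero_or_pos b with rfl | h
    · omega
    · exact h
  haveI : CharP F p := charP_of_injective_algebraMap (algebraMap (ZMod p) F).injective p
  haveI : ExpChar F p := ExpChar.prime (Fact.out : p.Prime)
  have hMb : M = b * (m - 1) := by
    have h1 : N * M = N * (b * (m - 1)) := by
      rw [← hM]
      have : N * (b * (m - 1)) = (N * b) * (m - 1) := by ring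
      rw [this, ← hb]
      have hmm : (m + 1) * (m - 1) = m * m - 1 := by
        obtain ⟨m', rfl⟩ := Nat.exists_eq_add_of_le (show 1 ≤ m by omega)
        have e : (1 + m') * (1 + m') = m' * m' + 2 * m' + 1 := by ring
        have e2 : (1 + m' + 1) * (1 + m' - 1) = m' * m' + 2 * m' := by
          rw [Nat.add_sub_cancel_left]; ring
        omega
      rw [hmm, ← hqm]
    exact Nat.eq_of_mul_eq_mul_left hN0 h1
  -- w and its powers
  set w : F := γ ^ (N * b) with hw
  have hwpow : ∀ k : ℕ, w ^ k = γ ^ (N * b * k) := fun k => by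
    rw [hw, ← pow_mul]
  have hword : w ^ (m - 1) = 1 := by
    rw [hwpow, show N * b * (m-1) = N * (b * (m-1)) from by ring, ← hMb, ← hM]
    exact gpow_q1 hcard hγ hq2 hadd hzero hsum0 hM hM0 hN0 hη'
  have hwm : ∀ k : ℕ, (w ^ k) ^ m = w ^ k := by
    intro k
    have : (w ^ k) ^ m = (w ^ k) ^ (m - 1) * (w ^ k) := by
      rw [← pow_succ]
      congr 1
      omega
    rw [this, ← pow_mul, mul_comm k (m-1), pow_mul, hword, one_pow, one_mul]
  have hwinj : ∀ k₁ < m - 1, ∀ k₂ < m - 1, w ^ k₁ = w ^ k₂ → k₁ = k₂ := by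
    intro k₁ h₁ k₂ h₂ h
    rw [hwpow, hwpow] at h
    have hbound : ∀ k, k < m - 1 → N * b * k < q - 1 := by
      intro k hk
      rw [hM, hMb]
      calc N * b * k < N * b * (m - 1) :=
            Nat.mul_lt_mul_of_pos_left hk (by positivity)
      _ = N * (b * (m-1)) := by ring
    have := gamma_pow_inj hcard hγ hq2 (hbound _ h₁) (hbound _ h₂) h
    have hNb : 0 < N * b := by positivity
    exact Nat.eq_of_mul_eq_mul_left hNb this
  -- the subfield as a finset
  set S' : Finset F := Finset.univ.filter (fun y => y ^ m = y) with hS'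
  have hmemS' : ∀ y : F, y ∈ S' ↔ y ^ m = y := by
    intro y; simp [hS']
  have hwk_mem : ∀ k, w ^ k ∈ S'.erase 0 := by
    intro k
    refine Finset.mem_erase.mpr ⟨pow_ne_zero _ (pow_ne_zero _ (gamma_ne_zero hcard hγ hq2)), ?_⟩
    exact (hmemS' _).mpr (hwm k)
  have hcardS' : S'.card ≤ m := by
    classical
    have hdeg : (Polynomial.X ^ m - Polynomial.X : Polynomial F).natDegree = m := by
      rw [Polynomial.natDegree_sub_eq_left_of_natDegree_lt, Polynomial.natDegree_X_pow]
      rw [Polynomial.natDegree_X_pow, Polynomial.natDegree_X]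
      omega
    have hPne : (Polynomial.X ^ m - Polynomial.X : Polynomial F) ≠ 0 := by
      intro hc
      rw [hc, Polynomial.natDegree_zero] at hdeg
      omega
    have hmono : S' ⊆ (Polynomial.X ^ m - Polynomial.X : Polynomial F).roots.toFinset := by
      intro y hy
      rw [Multiset.mem_toFinset, Polynomial.mem_roots']
      refine ⟨hPne, ?_⟩
      simp only [Polynomial.IsRoot.def, Polynomial.eval_sub, Polynomial.eval_pow,
        Polynomial.eval_X]
      rw [(hmemS' y).mp hy]
      ring
    have h1 := Polynomial.card_roots' (Polynomial.X ^ m - Polynomial.X : Polynomial F)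
    have h2 : S'.card ≤ (Polynomial.X ^ m - Polynomial.X : Polynomial F).roots.toFinset.card :=
      Finset.card_le_card hmono
    have h3 := Multiset.toFinset_card_le (Polynomial.X ^ m - Polynomial.X : Polynomial F).roots
    omega
  -- the image T of k ↦ w^k
  set T : Finset F := (Finset.range (m-1)).image (fun k => w ^ k) with hT
  have hcardT : T.card = m - 1 := by
    rw [hT, Finset.card_image_of_injOn, Finset.card_range]
    intro k₁ h₁ k₂ h₂ h
    exact hwinj _ (Finset.mem_range.mp h₁) _ (Finset.mem_range.mp h₂) h
  have hTsub : T ⊆ S'.erase 0 := by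
    intro y hy
    obtain ⟨k, _, rfl⟩ := Finset.mem_image.mp hy
    exact hwk_mem k
  have hzeroS' : (0 : F) ∈ S' := (hmemS' 0).mpr (by rw [zero_pow (by omega)])
  have hTeq : T = S'.erase 0 := by
    apply Finset.eq_of_subset_of_card_le hTsub
    have : (S'.erase 0).card = S'.card - 1 := Finset.card_erase_of_mem hzeroS'
    omega
  -- character sum over the subfield
  have hTT : ∀ β : F, (∑ y ∈ S', ψ (β * y)) = 0 ∨ (∑ y ∈ S', ψ (β * y)) = m := by
    intro β
    by_cases hall : ∀ y ∈ S', ψ (β * y) = 1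
    · right
      rw [Finset.sum_congr rfl hall]
      have : S'.card = m := by
        have h1 : (S'.erase 0).card = S'.card - 1 := Finset.card_erase_of_mem hzeroS'
        have h2 : (S'.erase 0).card = m - 1 := by rw [← hTeq, hcardT]
        have h3 : 1 ≤ S'.card := Finset.card_pos.mpr ⟨0, hzeroS'⟩
        omega
      simp [this]
    · left
      push_neg at hall
      obtain ⟨y₀, hy₀S, hy₀⟩ := hall
      have hy₀m : y₀ ^ m = y₀ := (hmemS' y₀).mp hy₀S
      have hshift : ∑ y ∈ S', ψ (β * y) = ∑ y ∈ S', ψ (β * (y + y₀)) := by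
        apply Finset.sum_nbij' (fun y => y - y₀) (fun y => y + y₀)
        · intro y hy
          have hym := (hmemS' y).mp hy
          rw [hmemS']
          rw [hps] at hym hy₀m ⊢
          rw [sub_pow_char_pow, hym, hy₀m]
        · intro y hy
          have hym := (hmemS' y).mp hy
          rw [hmemS']
          rw [hps] at hym hy₀m ⊢
          rw [add_pow_char_pow, hym, hy₀m]
        · intro y _; ring
        · intro y _; ring
        · intro y _; congr 1; ring
      have hfac : ∑ y ∈ S', ψ (β * (y + y₀)) = ψ (β * y₀) * ∑ y ∈ S', ψ (β * y) := by
        rw [Finset.mul_sum]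
        apply Finset.sum_congr rfl
        intro y _
        rw [← hadd _ _]
        congr 1
        ring
      have : (1 - ψ (β * y₀)) * ∑ y ∈ S', ψ (β * y) = 0 := by
        rw [hfac] at hshift
        linear_combination hshift
      rcases mul_eq_zero.mp this with h | h
      · exact absurd (by linear_combination -h) hy₀
      · exact h
  -- decompose η a
  have hdecomp : η a = ∑ i ∈ Finset.range b, ((∑ y ∈ S', ψ (γ ^ (a + N * i) * y)) - 1) := by
    rw [hη' a, hMb, dsum b (m-1) (fun j => ψ (γ ^ (a + N * j)))]
    apply Finset.sum_congr rfl
    intro i _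
    have inner : ∀ k : ℕ, ψ (γ ^ (a + N * (i + b * k))) = ψ (γ ^ (a + N * i) * w ^ k) := by
      intro k
      congr 1
      rw [hwpow, ← pow_add]
      congr 1
      ring
    rw [Finset.sum_congr rfl (fun k _ => inner k)]
    have himg : ∑ k ∈ Finset.range (m-1), ψ (γ ^ (a + N * i) * w ^ k)
        = ∑ y ∈ S'.erase 0, ψ (γ ^ (a + N * i) * y) := by
      rw [← hTeq, hT, Finset.sum_image]
      intro k₁ h₁ k₂ h₂ h
      exact hwinj _ (Finset.mem_range.mp h₁) _ (Finset.mem_range.mp h₂) h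
    rw [himg]
    have : ∑ y ∈ S', ψ (γ ^ (a + N * i) * y)
        = ψ (γ ^ (a + N * i) * 0) + ∑ y ∈ S'.erase 0, ψ (γ ^ (a + N * i) * y) :=
      (Finset.add_sum_erase _ _ hzeroS').symm
    rw [this, mul_zero, hzero]
    ring
  obtain ⟨z, hz⟩ := sum_zero_or (Finset.range b) (fun i => ∑ y ∈ S', ψ (γ ^ (a + N * i) * y)) m
    (fun i _ => hTT _)
  refine ⟨z, ?_⟩
  rw [hdecomp, Finset.sum_sub_distrib, hz]
  simp

end

set_option maxHeartbeats 1600000 in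
/-- Proposition 2.7 / `circu`.  If the Gauss periods of order `N` of
`F_q` take exactly three rational values in arithmetic progression `α₂-t, α₂, α₂+t`
(`t > 0`), then `I₁ - I₃` generates a circulant weighing matrix `CW(N, q/t²)`, i.e.
`(I₁-I₃)(I₁-I₃)⁽⁻¹⁾ = (q/t²)·1` in `ℚ[Z_N]`, if and only if `q` is a square and
`α₂ = (√q - 1)/N`. -/
theorem stmt_4
    (p f N q : ℕ) [Fact p.Prime] (hf : 0 < f) (hq : q = p ^ f)
    (hN : 2 < N) [NeZero N] (hNq : N ∣ q - 1)
    (F : Type) [Field F] [Fintype F] [Algebra (ZMod p) F]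
    (hcard : Fintype.card F = q)
    (γ : F) (hγ : orderOf γ = q - 1)
    (ζ : ℂ) (hζ : IsPrimitiveRoot ζ p)
    (ψ : F → ℂ) (hψ : ∀ x, ψ x = ζ ^ (Algebra.trace (ZMod p) F x).val)
    (η : ℕ → ℂ)
    (hη : ∀ a, η a = ∑ j ∈ Finset.range ((q - 1) / N), ψ (γ ^ (a + N * j)))
    (α₁ α₂ α₃ : ℚ)
    (h12 : α₁ ≠ α₂) (h13 : α₁ ≠ α₃) (h23 : α₂ ≠ α₃)
    (hval : {c : ℂ | ∃ a, a < N ∧ η a = c} = {(α₁ : ℂ), (α₂ : ℂ), (α₃ : ℂ)})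
    (I₁ I₂ I₃ : Finset (ZMod N))
    (hI₁ : ∀ x : ZMod N, x ∈ I₁ ↔ η x.val = (α₁ : ℂ))
    (hI₂ : ∀ x : ZMod N, x ∈ I₂ ↔ η x.val = (α₂ : ℂ))
    (hI₃ : ∀ x : ZMod N, x ∈ I₃ ↔ η x.val = (α₃ : ℂ))
    (t : ℕ) (ht : 0 < t)
    (hα12 : α₁ - α₂ = -(t : ℚ)) (hα32 : α₃ - α₂ = (t : ℚ)) :
    ((∑ a ∈ I₁, AddMonoidAlgebra.single a (1 : ℚ))
          - (∑ a ∈ I₃, AddMonoidAlgebra.single a (1 : ℚ)))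
      * ((∑ a ∈ I₁, AddMonoidAlgebra.single (-a) (1 : ℚ))
          - (∑ a ∈ I₃, AddMonoidAlgebra.single (-a) (1 : ℚ)))
      = ((q : ℚ) / (t : ℚ) ^ 2) • (1 : AddMonoidAlgebra ℚ (ZMod N))
    ↔ ∃ m : ℕ, q = m ^ 2 ∧ α₂ = ((m : ℚ) - 1) / N := by
  classical
  -- basic numerology
  have hp2 : 2 ≤ p := (Fact.out : p.Prime).two_le
  have hq2 : 2 ≤ q := by
    rw [hq]
    calc 2 = 2 ^ 1 := by norm_num
    _ ≤ p ^ f := Nat.pow_le_pow_left hp2 f |>.trans' (by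
          exact Nat.pow_le_pow_right (by omega) hf) |>.trans (le_refl _)
  have hN0 : 0 < N := by omega
  set M : ℕ := (q - 1) / N with hMdef
  have hM : q - 1 = N * M := (Nat.mul_div_cancel' hNq).symm
  have hM0 : 0 < M := by
    rcases Nat.eq_zero_or_pos M with h | h
    · rw [h, Nat.mul_zero] at hM; omega
    · exact h
  have hη' : ∀ a, η a = ∑ j ∈ Finset.range M, ψ (γ ^ (a + N * j)) := hη
  -- character facts
  have hadd : ∀ x y : F, ψ (x + y) = ψ x * ψ y := psi_add hζ hψ
  have hzero : ψ 0 = 1 := psi_zero hζ hψ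
  have hsum0 : ∑ x : F, ψ x = 0 := psi_sum_zero hζ hψ
  -- values of η
  have hvals : ∀ a : ℕ, η a = (α₁ : ℂ) ∨ η a = (α₂ : ℂ) ∨ η a = (α₃ : ℂ) := by
    intro a
    have h1 : η (a % N) ∈ {c : ℂ | ∃ a', a' < N ∧ η a' = c} :=
      ⟨a % N, Nat.mod_lt _ hN0, rfl⟩
    rw [hval] at h1
    rw [eta_mod hcard hγ hq2 hadd hzero hsum0 hM hM0 hN0 hη' a]
    simpa using h1
  have hconj : ∀ a : ℕ, (starRingEnd ℂ) (η a) = η a := by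
    intro a
    rcases hvals a with h | h | h <;> rw [h] <;> exact map_ratCast (starRingEnd ℂ) _
  -- the index of -1
  obtain ⟨i₀, hi₀lt, hi₀⟩ := gamma_pow_surj hcard hγ hq2 (x := (-1 : F))
    (neg_ne_zero.mpr one_ne_zero)
  have eta_shift : ∀ a : ℕ, η (a + i₀) = η a := by
    intro a
    have h1 : η (a + i₀) = ∑ j ∈ Finset.range M, ψ (-(γ ^ (a + N * j))) := by
      rw [hη']
      apply Finset.sum_congr rfl
      intro j _
      congr 1
      have : a + i₀ + N * j = i₀ + (a + N * j) := by ring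
      rw [this, pow_add, hi₀]
      ring
    have h2 : ∀ x : F, ψ (-x) = (starRingEnd ℂ) (ψ x) := psi_neg hζ hψ
    simp_rw [h1, h2]
    rw [← map_sum, ← hη' a, hconj a]
  have I0 : i₀ % N = 0 := by
    by_contra hr
    have hrN : i₀ % N < N := Nat.mod_lt _ hN0
    have hshiftN : ∀ a : ℕ, η (a + i₀ % N) = η a := by
      intro a
      have h1 : η (a + i₀ % N + N * (i₀ / N)) = η (a + i₀ % N) :=
        eta_add_mul hcard hγ hq2 hadd hzero hsum0 hM hM0 hN0 hη' _ _
      have h2 : a + i₀ = a + i₀ % N + N * (i₀ / N) := by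
        rw [add_assoc, Nat.mod_add_div]
      rw [← eta_shift a, h2, h1]
    have c0 := corr hcard hγ hq2 hadd hzero hsum0 hM hM0 hN0 hη' i₀ hi₀lt hi₀ 0 hN0
    have cr := corr hcard hγ hq2 hadd hzero hsum0 hM hM0 hN0 hη' i₀ hi₀lt hi₀ (i₀ % N) hrN
    rw [if_neg (by omega : ¬ (0 : ℕ) = i₀ % N)] at c0
    rw [if_pos rfl] at cr
    have heqsum : ∑ a ∈ Finset.range N, η a * η (a + i₀ % N)
        = ∑ a ∈ Finset.range N, η a * η (a + 0) := by
      apply Finset.sum_congr rfl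
      intro a _
      rw [add_zero, hshiftN a]
    rw [heqsum, c0] at cr
    have : (q : ℂ) = 0 := by linear_combination -cr
    have : q = 0 := by exact_mod_cast this
    omega
  have corr0 : ∀ g : ℕ, g < N → ∑ a ∈ Finset.range N, η a * η (a + g)
      = (q : ℂ) * (if g = 0 then 1 else 0) - M := by
    intro g hg
    rw [corr hcard hγ hq2 hadd hzero hsum0 hM hM0 hN0 hη' i₀ hi₀lt hi₀ g hg, I0]
  have sum_eta' : ∑ a ∈ Finset.range N, η a = -1 :=
    sum_eta hcard hγ hq2 hadd hzero hsum0 hM hM0 hN0 hη'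
  -- partition of ZMod N
  have hcast12 : (α₁ : ℂ) ≠ (α₂ : ℂ) := by exact_mod_cast h12
  have hcast13 : (α₁ : ℂ) ≠ (α₃ : ℂ) := by exact_mod_cast h13
  have hcast23 : (α₂ : ℂ) ≠ (α₃ : ℂ) := by exact_mod_cast h23
  have hcover : ∀ x : ZMod N, x ∈ I₁ ∨ x ∈ I₂ ∨ x ∈ I₃ := by
    intro x
    rcases hvals x.val with h | h | h
    · exact Or.inl ((hI₁ x).mpr h)
    · exact Or.inr (Or.inl ((hI₂ x).mpr h))
    · exact Or.inr (Or.inr ((hI₃ x).mpr h))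
  -- the ±1 function and the rational η
  set e : ZMod N → ℚ := fun x => (if x ∈ I₁ then 1 else 0) - (if x ∈ I₃ then 1 else 0)
    with he
  set η' : ZMod N → ℚ := fun x => α₂ - t * e x with hη'q
  have hη'c : ∀ x : ZMod N, ((η' x : ℚ) : ℂ) = η x.val := by
    intro x
    rcases hcover x with h | h | h
    · have hv := (hI₁ x).mp h
      have h3 : x ∉ I₃ := fun h3 => hcast13 (hv ▸ (hI₃ x).mp h3 ▸ rfl)
      have : η' x = α₁ := by
        rw [hη'q]; simp only [he, if_pos h, if_neg h3]
        linarith [hα12]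
      rw [this, hv]
    · have hv := (hI₂ x).mp h
      have h1 : x ∉ I₁ := fun h1 => hcast12 ((hI₁ x).mp h1 ▸ hv ▸ rfl)
      have h3 : x ∉ I₃ := fun h3 => hcast23 (hv ▸ (hI₃ x).mp h3 ▸ rfl)
      have : η' x = α₂ := by
        rw [hη'q]; simp only [he, if_neg h1, if_neg h3]
        ring
      rw [this, hv]
    · have hv := (hI₃ x).mp h
      have h1 : x ∉ I₁ := fun h1 => hcast13 ((hI₁ x).mp h1 ▸ hv ▸ rfl)
      have : η' x = α₃ := by
        rw [hη'q]; simp only [he, if_neg h1, if_pos h]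
        linarith [hα32]
      rw [this, hv]
  -- rational-level sum identities
  have T1 : ∑ x : ZMod N, η' x = -1 := by
    have hc : ((∑ x : ZMod N, η' x : ℚ) : ℂ) = ((-1 : ℚ) : ℂ) := by
      push_cast
      rw [Finset.sum_congr rfl (fun x _ => hη'c x)]
      rw [zsum N (fun a => η a), sum_eta']
    exact_mod_cast hc
  have T2 : ∀ g : ZMod N, ∑ x : ZMod N, η' x * η' (x + g)
      = (q : ℚ) * (if g = 0 then 1 else 0) - M := by
    intro g
    have keyC : ∑ x : ZMod N, (η' x * η' (x + g) : ℂ)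
        = (q : ℂ) * (if g = 0 then 1 else 0) - M := by
      have hterm : ∀ x : ZMod N, (η' x * η' (x + g) : ℂ)
          = η x.val * η (x.val + g.val) := by
        intro x
        push_cast
        rw [hη'c x, hη'c (x + g)]
        congr 1
        rw [eta_mod hcard hγ hq2 hadd hzero hsum0 hM hM0 hN0 hη' (x.val + g.val),
          ZMod.val_add]
      rw [Finset.sum_congr rfl (fun x _ => hterm x)]
      rw [zsum N (fun a => η a * η (a + g.val))]
      rw [corr0 g.val (ZMod.val_lt g)]
      congr 2
      by_cases hgz : g = 0
      · simp [hgz]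
      · rw [if_neg hgz, if_neg (fun h => hgz (by rwa [← ZMod.val_eq_zero]))]
    have hiff : ((if g = 0 then (1:ℚ) else 0 : ℚ) : ℂ) = (if g = 0 then (1:ℂ) else 0) := by
      split_ifs <;> norm_num
    apply Rat.cast_injective (α := ℂ)
    push_cast
    rw [hiff]
    convert keyC using 2 <;> push_cast <;> ring
  -- group ring coefficient computations
  haveI : Fact (1 < N) := ⟨by omega⟩
  set U : AddMonoidAlgebra ℚ (ZMod N) :=
    (∑ a ∈ I₁, AddMonoidAlgebra.single a (1 : ℚ))
      - (∑ a ∈ I₃, AddMonoidAlgebra.single a (1 : ℚ)) with hU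
  set V : AddMonoidAlgebra ℚ (ZMod N) :=
    (∑ a ∈ I₁, AddMonoidAlgebra.single (-a) (1 : ℚ))
      - (∑ a ∈ I₃, AddMonoidAlgebra.single (-a) (1 : ℚ)) with hV
  have coeffA : ∀ (I : Finset (ZMod N)) (x : ZMod N),
      (∑ a ∈ I, AddMonoidAlgebra.single a (1 : ℚ)).coeff x = if x ∈ I then 1 else 0 := by
    intro I x
    rw [AddMonoidAlgebra.coeff_sum, Finset.sum_apply']
    simp_rw [AddMonoidAlgebra.coeff_single, Finsupp.single_apply]
    rw [Finset.sum_ite_eq' I x (fun _ => (1:ℚ))]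
  have coeffB : ∀ (I : Finset (ZMod N)) (x : ZMod N),
      (∑ a ∈ I, AddMonoidAlgebra.single (-a) (1 : ℚ)).coeff x = if -x ∈ I then 1 else 0 := by
    intro I x
    rw [AddMonoidAlgebra.coeff_sum, Finset.sum_apply']
    simp_rw [AddMonoidAlgebra.coeff_single, Finsupp.single_apply]
    have hcond : ∀ a : ZMod N, ((-a : ZMod N) = x) = (a = -x) := by
      intro a
      apply propext
      constructor
      · intro h; rw [← h]; ring
      · intro h; rw [h]; ring
    simp_rw [hcond]
    rw [Finset.sum_ite_eq' I (-x) (fun _ => (1:ℚ))]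
  have hUx : ∀ x : ZMod N, U.coeff x = e x := by
    intro x
    rw [hU, AddMonoidAlgebra.coeff_sub, Finsupp.sub_apply, coeffA, coeffA, he]
  have hVx : ∀ x : ZMod N, V.coeff x = e (-x) := by
    intro x
    rw [hV, AddMonoidAlgebra.coeff_sub, Finsupp.sub_apply, coeffB, coeffB, he]
  have hUVx : ∀ x : ZMod N, (U * V).coeff x = ∑ a : ZMod N, e a * e (a - x) := by
    intro x
    rw [AddMonoidAlgebra.mul_apply]
    rw [Finsupp.sum_fintype _ _ (fun a => by simp)]
    have inner : ∀ a : ZMod N,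
        (V.coeff.sum fun a₂ b₂ => if a + a₂ = x then U.coeff a * b₂ else 0) = U.coeff a * V.coeff (x - a) := by
      intro a
      rw [Finsupp.sum_fintype _ _ (fun b => by simp)]
      have hc : ∀ b : ZMod N, (if a + b = x then U.coeff a * V.coeff b else 0)
          = (if b = x - a then U.coeff a * V.coeff b else 0) := by
        intro b
        apply if_congr _ rfl rfl
        constructor
        · intro h; rw [← h]; ring
        · intro h; rw [h]; ring
      simp_rw [hc]
      rw [Finset.sum_ite_eq' Finset.univ (x - a) (fun b => U.coeff a * V.coeff b)]
      simp
    apply Finset.sum_congr rfl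
    intro a _
    rw [inner a, hUx, hVx, neg_sub]
  have hRx : ∀ x : ZMod N, (((q : ℚ) / (t:ℚ)^2) • (1 : AddMonoidAlgebra ℚ (ZMod N))).coeff x
      = ((q : ℚ) / (t:ℚ)^2) * (if x = 0 then 1 else 0) := by
    intro x
    rw [AddMonoidAlgebra.coeff_smul, Finsupp.smul_apply, AddMonoidAlgebra.one_def, AddMonoidAlgebra.coeff_single, Finsupp.single_apply, smul_eq_mul]
    by_cases hx : (0 : ZMod N) = x
    · rw [if_pos hx, if_pos hx.symm]
    · rw [if_neg hx, if_neg (fun h => hx h.symm)]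
  -- the quadratic identity for the correlation of e
  have hts : ∀ y : ZMod N, (t:ℚ) * e y = α₂ - η' y := by
    intro y; rw [hη'q]; ring
  have hreindex : ∀ x : ZMod N, ∑ a : ZMod N, η' (a - x) = ∑ a : ZMod N, η' a := by
    intro x
    exact Fintype.sum_equiv (Equiv.subRight x) _ _ (fun a => rfl)
  have hsum : ∀ x : ZMod N, (t:ℚ)^2 * (∑ a : ZMod N, e a * e (a - x))
      = ((N:ℚ) * α₂^2 + 2*α₂ - M) + q * (if x = 0 then 1 else 0) := by
    intro x
    have expand : ∀ a : ZMod N, (t:ℚ)^2 * (e a * e (a-x))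
        = α₂^2 - α₂ * η' (a-x) - α₂ * η' a + η' a * η' (a-x) := by
      intro a
      have h1 := hts a
      have h2 := hts (a - x)
      calc (t:ℚ)^2 * (e a * e (a-x)) = ((t:ℚ) * e a) * ((t:ℚ) * e (a-x)) := by ring
      _ = (α₂ - η' a) * (α₂ - η' (a-x)) := by rw [h1, h2]
      _ = α₂^2 - α₂ * η' (a-x) - α₂ * η' a + η' a * η' (a-x) := by ring
    rw [Finset.mul_sum, Finset.sum_congr rfl (fun a _ => expand a)]
    rw [Finset.sum_add_distrib, Finset.sum_sub_distrib, Finset.sum_sub_distrib]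
    have c1 : ∑ _a : ZMod N, α₂^2 = (N:ℚ) * α₂^2 := by
      rw [Finset.sum_const, Finset.card_univ, ZMod.card, nsmul_eq_mul]
    have c2 : ∑ a : ZMod N, α₂ * η' (a - x) = -α₂ := by
      rw [← Finset.mul_sum, hreindex, T1]; ring
    have c3 : ∑ a : ZMod N, α₂ * η' a = -α₂ := by
      rw [← Finset.mul_sum, T1]; ring
    have c4 : ∑ a : ZMod N, η' a * η' (a - x) = (q:ℚ) * (if x = 0 then 1 else 0) - M := by
      have h := T2 (-x)
      simp_rw [← sub_eq_add_neg] at h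
      rw [h]
      congr 2
      by_cases hx : x = 0
      · simp [hx]
      · rw [if_neg hx, if_neg (fun hc => hx (neg_eq_zero.mp hc))]
    rw [c1, c2, c3, c4]
    ring
  have htne : ((t:ℚ))^2 ≠ 0 := by positivity
  have hNQ : (N:ℚ) ≠ 0 := by positivity
  have hcastq : ((q:ℚ) - 1) = (N:ℚ) * M := by
    have h2 : ((q - 1 : ℕ) : ℚ) = ((N * M : ℕ) : ℚ) := by rw [hM]
    rw [Nat.cast_sub (by omega : 1 ≤ q), Nat.cast_mul] at h2
    simpa using h2
  have hiff1 : (U * V = ((q : ℚ) / (t:ℚ)^2) • (1 : AddMonoidAlgebra ℚ (ZMod N)))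
      ↔ ((N:ℚ) * α₂ + 1)^2 = q := by
    constructor
    · intro hEq
      have hx1 : (1 : ZMod N) ≠ 0 := one_ne_zero
      have h1 := congrArg (fun W : AddMonoidAlgebra ℚ (ZMod N) => W.coeff (1 : ZMod N)) hEq
      rw [hUVx, hRx, if_neg hx1, mul_zero] at h1
      have h2 := hsum 1
      rw [h1, mul_zero, if_neg hx1, mul_zero, add_zero] at h2
      -- h2 : 0 = N α₂² + 2 α₂ − M
      linear_combination (N:ℚ) * h2.symm - hcastq
    · intro hsq
      have hC : (N:ℚ) * α₂^2 + 2*α₂ - M = 0 := by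
        have hN2 : (N:ℚ) * ((N:ℚ) * α₂^2 + 2*α₂ - M) = 0 := by
          linear_combination hsq + hcastq
        rcases mul_eq_zero.mp hN2 with h | h
        · exact absurd h hNQ
        · exact h
      apply AddMonoidAlgebra.ext
      apply Finsupp.ext
      intro x
      rw [hUVx, hRx]
      have h2 := hsum x
      rw [hC] at h2
      rw [zero_add] at h2
      field_simp at h2 ⊢
      linear_combination h2
  rw [hiff1]
  -- final arithmetic equivalence
  constructor
  · intro hsq
    -- integrality of α₂
    have hα₂mem : (α₂ : ℂ) ∈ {c : ℂ | ∃ a, a < N ∧ η a = c} := by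
      rw [hval]; right; left; rfl
    obtain ⟨a₂, ha₂N, ha₂⟩ := hα₂mem
    have hζint : ζ ∈ integralClosure ℤ ℂ := by
      refine ⟨Polynomial.X ^ p - Polynomial.C 1, Polynomial.monic_X_pow_sub_C 1
        (Fact.out : p.Prime).ne_zero, ?_⟩
      simp [hζ.pow_eq_one]
    have hηint : IsIntegral ℤ ((α₂ : ℚ) : ℂ) := by
      rw [← ha₂, hη' a₂]
      have hmem : (∑ j ∈ Finset.range M, ψ (γ ^ (a₂ + N * j))) ∈ integralClosure ℤ ℂ := by
        apply Subalgebra.sum_mem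
        intro j _
        rw [hψ]
        exact Subalgebra.pow_mem _ hζint _
      exact hmem
    have hαint : IsIntegral ℤ α₂ := by
      have hinj : Function.Injective (IsScalarTower.toAlgHom ℤ ℚ ℂ) :=
        (algebraMap ℚ ℂ).injective
      rw [← isIntegral_algHom_iff (IsScalarTower.toAlgHom ℤ ℚ ℂ) hinj]
      have : (IsScalarTower.toAlgHom ℤ ℚ ℂ) α₂ = ((α₂ : ℚ) : ℂ) :=
        eq_ratCast ((IsScalarTower.toAlgHom ℤ ℚ ℂ) : ℚ →+* ℂ) α₂
      rw [this]
      exact hηint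
    obtain ⟨z₂, hz₂⟩ := IsIntegrallyClosed.isIntegral_iff.mp hαint
    have hz₂' : (z₂ : ℚ) = α₂ := by exact_mod_cast hz₂
    set x : ℤ := N * z₂ + 1 with hxdef
    have hx2 : x^2 = (q:ℤ) := by
      have hxq : ((x:ℤ):ℚ)^2 = ((q:ℕ):ℚ) := by
        rw [hxdef]
        push_cast
        rw [hz₂']
        exact hsq
      exact_mod_cast hxq
    set m : ℕ := x.natAbs with hmdef
    have hmx : (m:ℤ) * (m:ℤ) = x * x := by
      rw [hmdef]; exact_mod_cast Int.natAbs_mul_self (a := x)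
    have hqm : q = m^2 := by
      have : ((m^2 : ℕ) : ℤ) = (q:ℤ) := by
        push_cast
        rw [pow_two, hmx, ← pow_two, hx2]
      exact_mod_cast this.symm
    have hm2 : 2 ≤ m := by
      rcases Nat.lt_or_ge m 2 with h | h
      · interval_cases m <;> omega
      · exact h
    rcases le_or_gt 0 x with hx0 | hx0
    · refine ⟨m, hqm, ?_⟩
      have hxm : (m:ℤ) = x := Int.natAbs_of_nonneg hx0
      have hmq : (m:ℚ) = (N:ℚ) * α₂ + 1 := by
        have h' : ((m:ℤ):ℚ) = (((N:ℤ) * z₂ + 1 : ℤ):ℚ) := by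
          rw [hxm, hxdef]
        push_cast at h'
        rw [hz₂'] at h'
        exact h'
      rw [eq_div_iff hNQ]
      linear_combination -hmq
    · exfalso
      have hxm : x = -(m:ℤ) := by
        rw [hmdef]
        omega
      have hIZ : (N:ℤ) * z₂ + 1 = -(m:ℤ) := by rw [← hxdef]; exact hxm
      have hz₂neg : z₂ < 0 := by
        rcases le_or_gt 0 z₂ with h | h
        · exfalso
          have h1 : (0:ℤ) < N := by exact_mod_cast hN0
          have h2 : (2:ℤ) ≤ m := by exact_mod_cast hm2
          nlinarith [hIZ]
        · exact h
      set b : ℕ := (-z₂).toNat with hbdef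
      have hbz : (b:ℤ) = -z₂ := by rw [hbdef]; omega
      have hbN : m + 1 = N * b := by
        have hZ : (m:ℤ) + 1 = (N:ℤ) * (b:ℤ) := by
          rw [hbz]
          linear_combination hIZ
        exact_mod_cast hZ
      have hmdvd : m ∣ q := ⟨m, by rw [hqm]; ring⟩
      obtain ⟨s, hs, hps⟩ := (Nat.dvd_prime_pow (Fact.out : p.Prime)).mp (hq ▸ hmdvd)
      have hα₁mem : (α₁ : ℂ) ∈ {c : ℂ | ∃ a, a < N ∧ η a = c} := by
        rw [hval]; left; rfl
      obtain ⟨a₁, ha₁N, ha₁⟩ := hα₁mem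
      obtain ⟨z, hz⟩ := eta_lb hcard hγ hq2 hadd hzero hsum0 hM hM0 hN0 hη' m b s hm2
        (by rw [hqm]; ring) hbN hps a₁
      rw [ha₁] at hz
      have hQ : α₁ = (m:ℚ) * z - b := by exact_mod_cast hz
      have hα₂b : α₂ = -(b:ℚ) := by
        have h1 : (N:ℚ) * α₂ + 1 = -(m:ℚ) := by
          have h1' : (N:ℚ) * (z₂:ℚ) + 1 = -(m:ℚ) := by exact_mod_cast hIZ
          rw [hz₂'] at h1'
          exact h1'
        have h2 : (m:ℚ) + 1 = (N:ℚ) * b := by exact_mod_cast hbN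
        have := mul_left_cancel₀ hNQ (show (N:ℚ) * α₂ = (N:ℚ) * (-(b:ℚ)) by
          linear_combination h1 - h2)
        exact this
      have hmz : (0:ℚ) ≤ (m:ℚ) * z := by positivity
      have ht' : (0:ℚ) < t := by exact_mod_cast ht
      have hα₁eq : α₁ = α₂ - t := by linarith [hα12]
      rw [hα₂b] at hα₁eq
      linarith [hQ, hα₁eq, hmz, ht']
  · rintro ⟨m, hqm, hα⟩
    have hm : (N:ℚ) * α₂ + 1 = m := by
      rw [hα]
      field_simp
      ring
    rw [hm]
    exact_mod_cast hqm.symm
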